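/- arXiv:1810.02676 — 6 statements merged into one kernel-verified Lean document; each statement's English description precedes it below -/
import Mathlib

section
/- Let f(α) = arctan((c_y + 2ρ·sin α − ρ)/(c_x + 2ρ·cos α)) with c_x + 2ρ·cos α > 0. If α_SL satisfies f(α_SL) = 0 and 0 < α_SL − π/2 < π (i.e. the tangential heading θ = α_SL − π/2 lies in (0, π)), then f'(α_SL) < 0, i.e. f is strictly decreasing at α_SL. -/
open Real

theorem stmt_4 (c_x c_y ρ α_SL : ℝ) (hρ : 0 < ρ)
    (f : ℝ → ℝ)
    (hf : f = fun α => Real.arctan ((c_y + 2 * ρ * Real.sin α - ρ) / (c_x + 2 * ρ * Real.cos α)))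
    (hden : 0 < c_x + 2 * ρ * Real.cos α_SL)
    (hzero : f α_SL = 0)
    (hθ1 : 0 < α_SL - π / 2) (hθ2 : α_SL - π / 2 < π) :
    deriv f α_SL < 0 := by
  subst hf
  have hD0 : c_x + 2 * ρ * Real.cos α_SL ≠ 0 := ne_of_gt hden
  have hN : c_y + 2 * ρ * Real.sin α_SL - ρ = 0 := by
    have h : Real.arctan ((c_y + 2 * ρ * Real.sin α_SL - ρ) /
        (c_x + 2 * ρ * Real.cos α_SL)) = Real.arctan 0 := by
      simpa [Real.arctan_zero] using hzero
    have h2 := Real.arctan_injective h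
    field_simp at h2
    linarith
  have hcos : Real.cos α_SL < 0 := by
    apply Real.cos_neg_of_pi_div_two_lt_of_lt
    · linarith
    · linarith
  have hN' : HasDerivAt (fun α => c_y + 2 * ρ * Real.sin α - ρ)
      (2 * ρ * Real.cos α_SL) α_SL := by
    simpa using (((Real.hasDerivAt_sin α_SL).const_mul (2 * ρ)).const_add c_y).sub_const ρ
  have hD' : HasDerivAt (fun α => c_x + 2 * ρ * Real.cos α)
      (2 * ρ * (-Real.sin α_SL)) α_SL := by
    simpa using ((Real.hasDerivAt_cos α_SL).const_mul (2 * ρ)).const_add c_x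
  have hq : HasDerivAt (fun α => (c_y + 2 * ρ * Real.sin α - ρ) / (c_x + 2 * ρ * Real.cos α))
      (2 * ρ * Real.cos α_SL / (c_x + 2 * ρ * Real.cos α_SL)) α_SL := by
    have h := hN'.div hD' hD0
    refine h.congr_deriv ?_
    rw [hN, zero_mul, sub_zero, sq, mul_div_mul_right _ _ hD0]
  have h0 : (c_y + 2 * ρ * Real.sin α_SL - ρ) / (c_x + 2 * ρ * Real.cos α_SL) = 0 := by
    rw [hN]; simp
  have harc : HasDerivAt (fun α => Real.arctan ((c_y + 2 * ρ * Real.sin α - ρ) /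
      (c_x + 2 * ρ * Real.cos α)))
      (2 * ρ * Real.cos α_SL / (c_x + 2 * ρ * Real.cos α_SL)) α_SL := by
    have h := (Real.hasDerivAt_arctan ((c_y + 2 * ρ * Real.sin α_SL - ρ) /
      (c_x + 2 * ρ * Real.cos α_SL))).comp α_SL hq
    refine h.congr_deriv ?_
    simp [h0]
  rw [harc.deriv]
  exact div_neg_of_neg_of_pos (mul_neg_of_pos_of_neg (by positivity) hcos) hden
end

section
/- Let ψ₁(α) = arctan((c_y + 2ρ·sin α + ρ)/(c_x + 2ρ·cos α)) and L(α) = √((c_x + 2ρ·cos α)² + (c_y + 2ρ·sin α + ρ)²). Then ψ₁'(α) = (2ρ/L(α))·cos(ψ₁(α) − α), provided c_x + 2ρ·cos α > 0 and L(α) > 2ρ. -/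
open Real

theorem stmt_5 (c_x c_y ρ α : ℝ)
    (ψ₁ : ℝ → ℝ)
    (hψ₁ : ψ₁ = fun α => Real.arctan ((c_y + 2 * ρ * Real.sin α + ρ) / (c_x + 2 * ρ * Real.cos α)))
    (L : ℝ → ℝ)
    (hL : L = fun α => Real.sqrt ((c_x + 2 * ρ * Real.cos α) ^ 2 + (c_y + 2 * ρ * Real.sin α + ρ) ^ 2))
    (hden : 0 < c_x + 2 * ρ * Real.cos α) (hLpos : 2 * ρ < L α) :
    HasDerivAt ψ₁ ((2 * ρ / L α) * Real.cos (ψ₁ α - α)) α := by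
  subst hψ₁ hL
  set u := c_x + 2 * ρ * Real.cos α with hu
  set v := c_y + 2 * ρ * Real.sin α + ρ with hv
  have hune : u ≠ 0 := ne_of_gt hden
  have hL2 : (0:ℝ) < u ^ 2 + v ^ 2 := by positivity
  have hsq : Real.sqrt (u ^ 2 + v ^ 2) ^ 2 = u ^ 2 + v ^ 2 := Real.sq_sqrt hL2.le
  have hspos : 0 < Real.sqrt (u ^ 2 + v ^ 2) := Real.sqrt_pos.mpr hL2
  have h1 : HasDerivAt (fun α => c_x + 2 * ρ * Real.cos α) (2 * ρ * (-Real.sin α)) α :=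
    ((Real.hasDerivAt_cos α).const_mul (2 * ρ)).const_add c_x
  have h2 : HasDerivAt (fun α => c_y + 2 * ρ * Real.sin α + ρ) (2 * ρ * Real.cos α) α :=
    (((Real.hasDerivAt_sin α).const_mul (2 * ρ)).const_add c_y).add_const ρ
  have hdiv := h2.div h1 hune
  have harctan := hdiv.arctan
  convert harctan using 1
  · rfl
  simp only [Pi.div_apply, ← hu, ← hv]
  rw [Real.cos_sub, Real.cos_arctan, Real.sin_arctan]
  have key : Real.sqrt (1 + (v / u) ^ 2) = Real.sqrt (u ^ 2 + v ^ 2) / u := by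
    rw [show Real.sqrt (u^2+v^2) / u = Real.sqrt (u^2+v^2) / Real.sqrt (u^2) by
        rw [Real.sqrt_sq hden.le],
      ← Real.sqrt_div hL2.le]
    congr 1
    field_simp
  rw [key]
  field_simp
  rw [hsq]
  ring_nf
end

section
/- Let ψ₂(α) = arcsin(2ρ/L(α)) where L(α) = √((c_x + 2ρ·cos α)² + (c_y + 2ρ·sin α + ρ)²) and L(α) > 2ρ for all α in a neighborhood. Then ψ₂'(α) = −tan(ψ₂(α))·sin(ψ₂(α))·sin(ψ₁(α) − α), where ψ₁(α) = arctan((c_y + 2ρ·sin α + ρ)/(c_x + 2ρ·cos α)), provided c_x + 2ρ·cos α > 0. -/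
open Real

theorem stmt_6 (c_x c_y ρ α : ℝ) (hρ : 0 < ρ)
    (L : ℝ → ℝ)
    (hL : L = fun α => Real.sqrt ((c_x + 2 * ρ * Real.cos α) ^ 2 + (c_y + 2 * ρ * Real.sin α + ρ) ^ 2))
    (ψ₁ : ℝ → ℝ)
    (hψ₁ : ψ₁ = fun α => Real.arctan ((c_y + 2 * ρ * Real.sin α + ρ) / (c_x + 2 * ρ * Real.cos α)))
    (ψ₂ : ℝ → ℝ)
    (hψ₂ : ψ₂ = fun α => Real.arcsin (2 * ρ / L α))
    (hnbhd : ∃ ε > 0, ∀ x, |x - α| < ε → 2 * ρ < L x)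
    (hden : 0 < c_x + 2 * ρ * Real.cos α) :
    HasDerivAt ψ₂ (-Real.tan (ψ₂ α) * Real.sin (ψ₂ α) * Real.sin (ψ₁ α - α)) α := by
  obtain ⟨ε, hε, hball⟩ := hnbhd
  have hLα : 2 * ρ < L α := hball α (by simpa using hε)
  set u := c_x + 2 * ρ * Real.cos α with hu
  set v := c_y + 2 * ρ * Real.sin α + ρ with hv
  have hLval : L α = Real.sqrt (u ^ 2 + v ^ 2) := by rw [hL]
  set s := Real.sqrt (u ^ 2 + v ^ 2) with hs
  have hs0 : 0 < s := lt_trans (by positivity) (hLval ▸ hLα)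
  have hS0 : 0 < u ^ 2 + v ^ 2 := Real.sqrt_pos.mp hs0
  have hssq : s ^ 2 = u ^ 2 + v ^ 2 := Real.sq_sqrt hS0.le
  have h2ρs : 2 * ρ < s := hLval ▸ hLα
  -- derivatives
  have h1 : HasDerivAt (fun x => c_x + 2 * ρ * Real.cos x) (2 * ρ * (-Real.sin α)) α :=
    ((Real.hasDerivAt_cos α).const_mul (2 * ρ)).const_add c_x
  have h2 : HasDerivAt (fun x => c_y + 2 * ρ * Real.sin x + ρ) (2 * ρ * Real.cos α) α :=
    (((Real.hasDerivAt_sin α).const_mul (2 * ρ)).const_add c_y).add_const ρ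
  have hf : HasDerivAt (fun x => (c_x + 2 * ρ * Real.cos x) ^ 2 + (c_y + 2 * ρ * Real.sin x + ρ) ^ 2)
      (2 * u ^ 1 * (2 * ρ * (-Real.sin α)) + 2 * v ^ 1 * (2 * ρ * Real.cos α)) α := by
    have : HasDerivAt (fun x => (c_x + 2 * ρ * Real.cos x) ^ 2 + (c_y + 2 * ρ * Real.sin x + ρ) ^ 2) _ α :=
      (h1.pow 2).add (h2.pow 2)
    simpa using this
  have hLd : HasDerivAt L
      ((2 * u ^ 1 * (2 * ρ * (-Real.sin α)) + 2 * v ^ 1 * (2 * ρ * Real.cos α)) / (2 * s)) α := by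
    rw [hL]
    exact hf.sqrt hS0.ne'
  have hdiv : HasDerivAt (fun x => 2 * ρ / L x)
      ((0 * s - 2 * ρ * ((2 * u ^ 1 * (2 * ρ * (-Real.sin α)) + 2 * v ^ 1 * (2 * ρ * Real.cos α)) / (2 * s))) / s ^ 2) α := by
    have := (hasDerivAt_const α (2 * ρ)).fun_div hLd (hLval ▸ hs0.ne')
    simpa [hLval] using this
  set y := 2 * ρ / s with hy
  have hy0 : 0 < y := by positivity
  have hy1 : y < 1 := (div_lt_one hs0).mpr h2ρs
  have harcsin : HasDerivAt Real.arcsin (1 / Real.sqrt (1 - y ^ 2)) y :=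
    Real.hasDerivAt_arcsin (by linarith) (by linarith)
  have harcsin' : HasDerivAt Real.arcsin (1 / Real.sqrt (1 - y ^ 2)) (2 * ρ / L α) := by
    rw [hLval]; exact harcsin
  have hcomp := harcsin'.comp α hdiv
  have hψ₂eq : ψ₂ = Real.arcsin ∘ (fun x => 2 * ρ / L x) := by
    rw [hψ₂]; rfl
  rw [← hψ₂eq] at hcomp
  refine hcomp.congr_deriv ?_
  -- algebra
  set q := Real.sqrt (1 - y ^ 2) with hq
  have hq0 : 0 < q := Real.sqrt_pos.mpr (by nlinarith)
  have hqsq : q ^ 2 = 1 - y ^ 2 := Real.sq_sqrt (by nlinarith)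
  have hψ₂α : ψ₂ α = Real.arcsin y := by
    rw [hψ₂]; show Real.arcsin (2 * ρ / L α) = _; rw [hLval]
  have hsin : Real.sin (ψ₂ α) = y := by
    rw [hψ₂α]; exact Real.sin_arcsin (by linarith) (by linarith)
  have hcos : Real.cos (ψ₂ α) = q := by
    rw [hψ₂α, hq, Real.cos_arcsin]
  have hψ₁α : ψ₁ α = Real.arctan (v / u) := by rw [hψ₁]
  have hr : Real.sqrt (1 + (v / u) ^ 2) = s / u := by
    rw [show 1 + (v / u) ^ 2 = (s / u) ^ 2 by field_simp; linarith [hssq]]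
    exact Real.sqrt_sq (by positivity)
  have hsinψ₁ : Real.sin (ψ₁ α) = v / s := by
    rw [hψ₁α, Real.sin_arctan, hr]
    field_simp
  have hcosψ₁ : Real.cos (ψ₁ α) = u / s := by
    rw [hψ₁α, Real.cos_arctan, hr]
    field_simp
  rw [Real.tan_eq_sin_div_cos, hsin, hcos, Real.sin_sub, hsinψ₁, hcosψ₁, hy]
  field_simp
  ring
end

section
/- With ψ₁, ψ₂ as above, let g(α) = −ψ₁(α) + ψ₂(α). Then g'(α) = tan(ψ₂(α))·sin(θ(α) − ψ₁(α) + ψ₂(α)) where θ(α) = α − π/2. In particular, if at α = α_SL we have 0 < ψ₂(α_SL) < π/2 and 0 < θ(α_SL) − ψ₁(α_SL) + ψ₂(α_SL) < π, then g'(α_SL) > 0. -/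
open Real

lemma aux_alg (a b lv w ρ sα cα : ℝ) (ha : 0 < a) (hlv : 0 < lv) (hw : 0 < w)
    (h1 : lv ^ 2 = a ^ 2 + b ^ 2) (h2 : w ^ 2 = a ^ 2 + b ^ 2 - (2 * ρ) ^ 2) :
    (2 * ρ / lv) / (w / lv) *
      -((cα * (1 / (lv / a)) + sα * ((b / a) / (lv / a))) * (w / lv)
        - (sα * (1 / (lv / a)) - cα * ((b / a) / (lv / a))) * (2 * ρ / lv))
    = -(1 / (1 + (b / a) ^ 2) * ((2 * ρ * cα * a - b * (2 * ρ * (-sα))) / a ^ 2)) +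
      1 / (w / lv) *
        ((0 * lv - 2 * ρ * ((2 * a * (2 * ρ * (-sα)) + 2 * b * (2 * ρ * cα)) / (2 * lv))) / lv ^ 2) := by
  have h3 : 1 + (b/a)^2 = lv^2/a^2 := by field_simp [h1]; linarith
  rw [h3]
  field_simp
  ring

theorem stmt_7 (c_x c_y ρ α_SL : ℝ) (hρ : 0 < ρ)
    (L : ℝ → ℝ)
    (hL : L = fun α => Real.sqrt ((c_x + 2 * ρ * Real.cos α) ^ 2 + (c_y + 2 * ρ * Real.sin α + ρ) ^ 2))
    (ψ₁ : ℝ → ℝ)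
    (hψ₁ : ψ₁ = fun α => Real.arctan ((c_y + 2 * ρ * Real.sin α + ρ) / (c_x + 2 * ρ * Real.cos α)))
    (ψ₂ : ℝ → ℝ)
    (hψ₂ : ψ₂ = fun α => Real.arcsin (2 * ρ / L α))
    (g : ℝ → ℝ) (hg : g = fun α => -ψ₁ α + ψ₂ α)
    (θ : ℝ → ℝ) (hθ : θ = fun α => α - π / 2)
    (hden : ∀ α, 0 < c_x + 2 * ρ * Real.cos α)
    (hLgt : ∀ α, 2 * ρ < L α) :
    (∀ α, HasDerivAt g (Real.tan (ψ₂ α) * Real.sin (θ α - ψ₁ α + ψ₂ α)) α) ∧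
    ((0 < ψ₂ α_SL ∧ ψ₂ α_SL < π / 2) →
      (0 < θ α_SL - ψ₁ α_SL + ψ₂ α_SL ∧ θ α_SL - ψ₁ α_SL + ψ₂ α_SL < π) →
      0 < deriv g α_SL) := by
  have key : ∀ α, HasDerivAt g (Real.tan (ψ₂ α) * Real.sin (θ α - ψ₁ α + ψ₂ α)) α := by
    intro α
    set A : ℝ := c_x + 2 * ρ * Real.cos α with hAdef
    set B : ℝ := c_y + 2 * ρ * Real.sin α + ρ with hBdef
    have hA0 : 0 < A := hden α
    have hS0 : (0:ℝ) < A ^ 2 + B ^ 2 := by positivity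
    have hLα : L α = Real.sqrt (A ^ 2 + B ^ 2) := by rw [hL]
    have hLpos : 0 < L α := lt_trans (by positivity) (hLgt α)
    have hLsq : L α ^ 2 = A ^ 2 + B ^ 2 := by
      rw [hLα]; exact Real.sq_sqrt hS0.le
    have hLgt' : 2 * ρ < L α := hLgt α
    have hWpos : (0:ℝ) < A ^ 2 + B ^ 2 - (2*ρ)^2 := by
      nlinarith [hLsq, hLgt', hρ, hLpos]
    set W : ℝ := Real.sqrt (A ^ 2 + B ^ 2 - (2*ρ)^2) with hWdef
    have hW0 : 0 < W := Real.sqrt_pos.mpr hWpos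
    have hWsq : W ^ 2 = A ^ 2 + B ^ 2 - (2*ρ)^2 := Real.sq_sqrt hWpos.le
    -- derivatives of components
    have dA : HasDerivAt (fun x => c_x + 2 * ρ * Real.cos x) (2 * ρ * (-Real.sin α)) α := by
      simpa using ((Real.hasDerivAt_cos α).const_mul (2*ρ)).const_add c_x
    have dB : HasDerivAt (fun x => c_y + 2 * ρ * Real.sin x + ρ) (2 * ρ * Real.cos α) α := by
      simpa using (((Real.hasDerivAt_sin α).const_mul (2*ρ)).const_add c_y).add_const ρ
    have dS : HasDerivAt (fun x => (c_x + 2 * ρ * Real.cos x) ^ 2 + (c_y + 2 * ρ * Real.sin x + ρ) ^ 2)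
        (2 * A * (2 * ρ * (-Real.sin α)) + 2 * B * (2 * ρ * Real.cos α)) α := by
      have h1 := dA.pow 2
      have h2 := dB.pow 2
      have := (h1.add h2 : HasDerivAt (fun x => (c_x + 2 * ρ * Real.cos x) ^ 2 + (c_y + 2 * ρ * Real.sin x + ρ) ^ 2) _ α)
      exact this.congr_deriv (by rw [hAdef, hBdef]; push_cast; ring)
    have dL : HasDerivAt L
        ((2 * A * (2 * ρ * (-Real.sin α)) + 2 * B * (2 * ρ * Real.cos α)) / (2 * Real.sqrt (A^2+B^2))) α := by
      rw [hL]
      exact dS.sqrt (by simpa [hAdef, hBdef] using hS0.ne')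
    -- derivative of ψ₁
    have dQ : HasDerivAt (fun x => (c_y + 2 * ρ * Real.sin x + ρ) / (c_x + 2 * ρ * Real.cos x))
        ((2 * ρ * Real.cos α * A - B * (2 * ρ * (-Real.sin α))) / A ^ 2) α :=
      dB.div dA hA0.ne'
    have dψ₁ : HasDerivAt (fun x => Real.arctan ((c_y + 2 * ρ * Real.sin x + ρ) / (c_x + 2 * ρ * Real.cos x)))
        (1 / (1 + (B / A) ^ 2) * ((2 * ρ * Real.cos α * A - B * (2 * ρ * (-Real.sin α))) / A ^ 2)) α :=
      dQ.arctan
    have hq1 : 2 * ρ / L α ≠ -1 := by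
      have : (0:ℝ) < 2 * ρ / L α := div_pos (by positivity) hLpos
      linarith
    have hqlt : 2 * ρ / L α < 1 := (div_lt_one hLpos).mpr hLgt'
    have hq2 : 2 * ρ / L α ≠ 1 := ne_of_lt hqlt
    set Ld : ℝ := (2 * A * (2 * ρ * (-Real.sin α)) + 2 * B * (2 * ρ * Real.cos α)) / (2 * Real.sqrt (A^2+B^2)) with hLd
    have dq2 : HasDerivAt (fun x => 2 * ρ / L x) ((0 * L α - 2 * ρ * Ld) / L α ^ 2) α :=
      (hasDerivAt_const α (2*ρ)).div dL hLpos.ne'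
    have dψ₂ : HasDerivAt (fun x => Real.arcsin (2 * ρ / L x))
        (1 / Real.sqrt (1 - (2 * ρ / L α) ^ 2) * ((0 * L α - 2 * ρ * Ld) / L α ^ 2)) α :=
      by have := (Real.hasDerivAt_arcsin hq1 hq2).comp α dq2; exact this
    have total := dψ₁.neg.add dψ₂
    rw [hg, hψ₁, hψ₂, hθ]
    have hroot1 : Real.sqrt (1 + (B / A) ^ 2) = L α / A := by
      rw [show (1 + (B / A) ^ 2) = (A^2 + B^2) / A^2 by field_simp,
        Real.sqrt_div hS0.le, Real.sqrt_sq hA0.le, hLα]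
    have hroot2 : Real.sqrt (1 - (2 * ρ / L α) ^ 2) = W / L α := by
      rw [show (1 - (2 * ρ / L α) ^ 2) = (A^2 + B^2 - (2*ρ)^2) / (A^2 + B^2) by
          rw [div_pow, hLsq]; field_simp,
        Real.sqrt_div hWpos.le, ← hLα]
    have hqle1 : 2 * ρ / L α ≤ 1 := hqlt.le
    have hqge : -1 ≤ 2 * ρ / L α := by
      have : (0:ℝ) < 2 * ρ / L α := div_pos (by positivity) hLpos
      linarith
    have heq : Real.tan (Real.arcsin (2 * ρ / L α)) *
        Real.sin (α - π / 2 - Real.arctan (B / A) + Real.arcsin (2 * ρ / L α)) =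
        -(1 / (1 + (B / A) ^ 2) * ((2 * ρ * Real.cos α * A - B * (2 * ρ * (-Real.sin α))) / A ^ 2)) +
        1 / Real.sqrt (1 - (2 * ρ / L α) ^ 2) * ((0 * L α - 2 * ρ * Ld) / L α ^ 2) := by
      rw [Real.tan_eq_sin_div_cos, Real.sin_arcsin hqge hqle1, Real.cos_arcsin, hroot2,
        show α - π / 2 - Real.arctan (B / A) + Real.arcsin (2 * ρ / L α)
          = (α - Real.arctan (B / A) + Real.arcsin (2 * ρ / L α)) - π / 2 by ring,
        Real.sin_sub_pi_div_two,
        show α - Real.arctan (B / A) + Real.arcsin (2 * ρ / L α)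
          = (α - Real.arctan (B / A)) + Real.arcsin (2 * ρ / L α) by ring,
        Real.cos_add, Real.cos_sub, Real.sin_sub, Real.cos_arctan, Real.sin_arctan,
        Real.sin_arcsin hqge hqle1, Real.cos_arcsin, hroot1, hroot2, hLd, hLα]
      rw [← hLα]
      exact aux_alg A B (L α) W ρ (Real.sin α) (Real.cos α) hA0 hLpos hW0 hLsq hWsq
    beta_reduce
    rw [← hAdef, ← hBdef, heq]
    exact total
  refine ⟨key, fun h1 h2 => ?_⟩
  rw [(key α_SL).deriv]
  exact mul_pos (Real.tan_pos_of_pos_of_lt_pi_div_two h1.1 h1.2)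
    (Real.sin_pos_of_pos_of_lt_pi h2.1 h2.2)
end

section
/- Define φ₁(α) = mod(arctan((c_y + 2ρ sin α − ρ)/(c_x + 2ρ cos α)), 2π) and φ₂(α) = mod(α − φ₁(α) − π/2, 2π). Suppose at α_LS the inner arctan expression f(α) = arctan(...) is differentiable with f'(α_LS) = −k for some k > 0, f is continuous at α_LS, and φ₂(α_LS) = 0. Then for small δ > 0, φ₂(α_LS + δ) = (k + 1)δ + o(δ); in particular φ₂ is right-continuous at α_LS. -/
open Real Filter Asymptotics

noncomputable def rmod (x y : ℝ) : ℝ := x - y * ⌊x / y⌋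

lemma rmod_add_int_mul (x y : ℝ) (m : ℤ) (hy : y ≠ 0) :
    rmod (x + y * m) y = rmod x y := by
  unfold rmod
  have : (x + y * m) / y = x / y + m := by field_simp
  rw [this, Int.floor_add_intCast]
  push_cast; ring

lemma rmod_of_mem (n : ℤ) (t : ℝ) (ht0 : 0 ≤ t) (ht : t < 2 * π) :
    rmod (2 * π * n + t) (2 * π) = t := by
  have h2π : (0:ℝ) < 2 * π := by positivity
  unfold rmod
  have hdiv : (2 * π * n + t) / (2 * π) = t / (2 * π) + n := by
    field_simp; ring
  rw [hdiv, Int.floor_add_intCast]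
  have hfl : ⌊t / (2 * π)⌋ = 0 := by
    rw [Int.floor_eq_zero_iff]
    constructor
    · exact div_nonneg ht0 h2π.le
    · exact (div_lt_one h2π).2 ht
  rw [hfl]
  push_cast; ring

theorem stmt_10 (c_x c_y ρ α_LS k : ℝ) (hk : 0 < k)
    (f : ℝ → ℝ)
    (hf : f = fun α => Real.arctan ((c_y + 2 * ρ * Real.sin α - ρ) / (c_x + 2 * ρ * Real.cos α)))
    (φ₁ : ℝ → ℝ) (hφ₁ : φ₁ = fun α => rmod (f α) (2 * π))
    (φ₂ : ℝ → ℝ) (hφ₂ : φ₂ = fun α => rmod (α - φ₁ α - π / 2) (2 * π))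
    (hderiv : HasDerivAt f (-k) α_LS)
    (hcont : ContinuousAt f α_LS)
    (hzero : φ₂ α_LS = 0) :
    (fun δ => φ₂ (α_LS + δ) - (k + 1) * δ) =o[nhdsWithin 0 (Set.Ioi 0)] (fun δ => δ) ∧
    Tendsto φ₂ (nhdsWithin α_LS (Set.Ioi α_LS)) (nhds (φ₂ α_LS)) := by
  have h2π : (0:ℝ) < 2 * π := by positivity
  set h : ℝ → ℝ := fun α => α - f α - π / 2 with hh
  -- φ₂ in terms of h
  have key : ∀ α, φ₂ α = rmod (h α) (2 * π) := by
    intro α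
    rw [hφ₂, hφ₁]
    have hrew : α - rmod (f α) (2 * π) - π / 2 = h α + (2 * π) * ⌊f α / (2 * π)⌋ := by
      simp only [rmod, hh]; ring
    simp only [hrew]
    exact rmod_add_int_mul _ _ _ h2π.ne'
  -- h α_LS is a multiple of 2π
  have hmul : h α_LS = 2 * π * ⌊h α_LS / (2 * π)⌋ := by
    have := hzero
    rw [key α_LS] at this
    unfold rmod at this
    linarith
  set n : ℤ := ⌊h α_LS / (2 * π)⌋ with hn
  -- derivative of h
  have hd : HasDerivAt h (k + 1) α_LS := by
    have h1 : HasDerivAt (fun α : ℝ => α - f α - π / 2) (1 - -k) α_LS :=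
      ((hasDerivAt_id α_LS).sub hderiv).sub_const (π / 2)
    have : (1 : ℝ) - -k = k + 1 := by ring
    rw [this] at h1
    exact h1
  have ho : (fun δ => h (α_LS + δ) - h α_LS - δ * (k + 1)) =o[nhds 0] fun δ => δ := by
    have := hasDerivAt_iff_isLittleO_nhds_zero.1 hd
    simpa [smul_eq_mul, mul_comm] using this
  have ho' : (fun δ => h (α_LS + δ) - h α_LS - δ * (k + 1))
      =o[nhdsWithin 0 (Set.Ioi 0)] fun δ => δ := ho.mono nhdsWithin_le_nhds
  have hk1 : (0:ℝ) < (k + 1) / 2 := by linarith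
  -- eventual equality
  have heq : (fun δ => φ₂ (α_LS + δ) - (k + 1) * δ)
      =ᶠ[nhdsWithin 0 (Set.Ioi 0)] (fun δ => h (α_LS + δ) - h α_LS - δ * (k + 1)) := by
    have hb : ∀ᶠ δ in nhdsWithin 0 (Set.Ioi 0),
        |h (α_LS + δ) - h α_LS - δ * (k + 1)| ≤ (k + 1) / 2 * |δ| := by
      have := ho'.bound hk1
      simpa [Real.norm_eq_abs] using this
    have hsmall : Set.Ioo (0:ℝ) (2 * π / (2 * (k + 1))) ∈ nhdsWithin 0 (Set.Ioi 0) := by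
      apply Ioo_mem_nhdsGT
      positivity
    filter_upwards [hb, hsmall] with δ hbδ hδ
    obtain ⟨hδ0, hδu⟩ := hδ
    set e := h (α_LS + δ) - h α_LS - δ * (k + 1) with he
    have habs : |e| ≤ (k + 1) / 2 * δ := by
      rwa [abs_of_pos hδ0] at hbδ
    have he1 : -((k + 1) / 2 * δ) ≤ e := (abs_le.1 habs).1
    have he2 : e ≤ (k + 1) / 2 * δ := (abs_le.1 habs).2
    set t := δ * (k + 1) + e with ht
    have ht0 : 0 ≤ t := by
      have : (k + 1) / 2 * δ ≤ δ * (k + 1) := by nlinarith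
      simp only [ht]; linarith
    have htlt : t < 2 * π := by
      have h1 : δ * (k + 1) < 2 * π / 2 := by
        have := hδu
        calc δ * (k + 1) < 2 * π / (2 * (k + 1)) * (k + 1) := by nlinarith
          _ = 2 * π / 2 := by field_simp
      have h2 : e ≤ (k + 1) / 2 * δ := he2
      nlinarith
    have hval : h (α_LS + δ) = 2 * π * n + t := by
      simp only [ht, he]
      linarith [hmul]
    rw [key, hval, rmod_of_mem n t ht0 htlt]
    simp only [ht, he]; ring
  have main : (fun δ => φ₂ (α_LS + δ) - (k + 1) * δ)
      =o[nhdsWithin 0 (Set.Ioi 0)] fun δ => δ := heq.trans_isLittleO ho'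
  refine ⟨main, ?_⟩
  -- right-continuity
  have hδ0 : Tendsto (fun δ : ℝ => δ) (nhdsWithin 0 (Set.Ioi 0)) (nhds 0) :=
    tendsto_id.mono_left nhdsWithin_le_nhds
  have h1 : Tendsto (fun δ => φ₂ (α_LS + δ) - (k + 1) * δ)
      (nhdsWithin 0 (Set.Ioi 0)) (nhds 0) := main.isBigO.trans_tendsto hδ0
  have h2 : Tendsto (fun δ => φ₂ (α_LS + δ)) (nhdsWithin 0 (Set.Ioi 0)) (nhds 0) := by
    have := h1.add ((hδ0.const_mul (k + 1)))
    simpa using this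
  have hmap : Tendsto (fun α => α - α_LS) (nhdsWithin α_LS (Set.Ioi α_LS))
      (nhdsWithin 0 (Set.Ioi 0)) := by
    apply tendsto_nhdsWithin_of_tendsto_nhds_of_eventually_within
    · have : Tendsto (fun α => α - α_LS) (nhds α_LS) (nhds (α_LS - α_LS)) :=
        (continuous_id.sub continuous_const).tendsto α_LS
      simpa using this.mono_left nhdsWithin_le_nhds
    · filter_upwards [self_mem_nhdsWithin] with α hα
      exact Set.mem_Ioi.2 (sub_pos.2 (Set.mem_Ioi.1 hα))
  rw [hzero]
  exact (h2.comp hmap).congr fun α => by simp [Function.comp]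
end

section
/- If p = (0,0), the target circle has center C = (c_x, c_y) and radius ρ, and ‖(c_x + ρ cos α, c_y + ρ sin α)‖ > 4ρ for every α ∈ [0, 2π), then c_x² + (c_y − ρ)² > 4ρ², i.e., the quantity under the square root in L_S^{LSR} = √(c_x² + (c_y − ρ)² − 4ρ²) is positive, so the LSR straight segment is well defined. -/
open Real

theorem stmt_17 (c_x c_y ρ : ℝ) (hρ : 0 < ρ)
    (h4ρ : ∀ α ∈ Set.Ico 0 (2 * π),
      4 * ρ < Real.sqrt ((c_x + ρ * Real.cos α) ^ 2 + (c_y + ρ * Real.sin α) ^ 2)) :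
    4 * ρ ^ 2 < c_x ^ 2 + (c_y - ρ) ^ 2 := by
  have hπ : 0 < π := Real.pi_pos
  -- rule out C = 0
  by_cases hC : c_x = 0 ∧ c_y = 0
  · exfalso
    have h0 := h4ρ 0 ⟨le_refl 0, by positivity⟩
    simp [hC.1, hC.2] at h0
    rw [Real.sqrt_sq hρ.le] at h0
    linarith
  · have hz : (Complex.mk (-c_x) (-c_y)) ≠ 0 := by
      intro h
      apply hC
      have h1 := congrArg Complex.re h
      have h2 := congrArg Complex.im h
      simp at h1 h2
      exact ⟨h1, h2⟩
    set z : ℂ := Complex.mk (-c_x) (-c_y) with hzdef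
    set r : ℝ := Real.sqrt (c_x ^ 2 + c_y ^ 2) with hrdef
    have habs : ‖z‖ = r := by
      rw [Complex.norm_def, Complex.normSq_mk]
      congr 1
      ring
    have hr0 : 0 < r := by
      rw [← habs]
      exact (norm_pos_iff.mpr hz)
    have hcos : Real.cos z.arg = -c_x / r := by
      rw [Complex.cos_arg hz, habs]
    have hsin : Real.sin z.arg = -c_y / r := by
      rw [Complex.sin_arg, habs]
    have harg := Complex.arg_mem_Ioc z
    set α : ℝ := if z.arg < 0 then z.arg + 2 * π else z.arg with hαdef
    have hαmem : α ∈ Set.Ico 0 (2 * π) := by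
      rcases harg with ⟨h1, h2⟩
      rw [hαdef]
      by_cases hneg : z.arg < 0
      · rw [if_pos hneg]; exact ⟨by linarith, by linarith⟩
      · rw [if_neg hneg]; push_neg at hneg; exact ⟨hneg, by linarith⟩
    have hcosα : Real.cos α = -c_x / r := by
      by_cases hneg : z.arg < 0 <;> simp [hαdef, hneg, Real.cos_add_two_pi, hcos]
    have hsinα : Real.sin α = -c_y / r := by
      by_cases hneg : z.arg < 0 <;> simp [hαdef, hneg, Real.sin_add_two_pi, hsin]
    have key := h4ρ α hαmem
    rw [hcosα, hsinα] at key
    have hexp : (c_x + ρ * (-c_x / r)) ^ 2 + (c_y + ρ * (-c_y / r)) ^ 2 = (r - ρ) ^ 2 := by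
      have hr2 : r ^ 2 = c_x ^ 2 + c_y ^ 2 := Real.sq_sqrt (by positivity)
      field_simp
      nlinarith [hr2]
    rw [hexp, Real.sqrt_sq_eq_abs] at key
    have hrρ : 4 * ρ < r - ρ := by
      rcases abs_cases (r - ρ) with ⟨h, _⟩ | ⟨h, h'⟩
      · linarith
      · linarith
    have hcy : c_y ≤ r := by
      rw [hrdef]
      nlinarith [Real.sq_sqrt (show (0:ℝ) ≤ c_x ^ 2 + c_y ^ 2 by positivity),
        Real.sqrt_nonneg (c_x ^ 2 + c_y ^ 2)]
    have hr2 : r ^ 2 = c_x ^ 2 + c_y ^ 2 := Real.sq_sqrt (by positivity)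
    nlinarith [hrρ, hcy, hr2, hρ]
end
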